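/- For every d ≥ 4 there exists a d-simplex in Euclidean d-space that is equiradial (all facets have the same circumradius) but not equiareal (not all facets have equal (d-1)-dimensional volume; equivalently, not all altitudes are equal). -/

import Mathlib

/-
Common geometric notions for simplices in Euclidean d-space, following
Edmonds–Hajja–Martini, "Coincidences of simplex centers and related facial
structures".  A d-simplex is given by its d+1 affinely independent vertices
`A : Fin (d+1) → EuclideanSpace ℝ (Fin d)`.
-/

noncomputable section

abbrev Pt (d : ℕ) : Type := EuclideanSpace ℝ (Fin d)

variable {d : ℕ}

/-- The centroid of the simplex with vertices `A`: the average of the vertices. -/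
def ctr (A : Fin (d+1) → Pt d) : Pt d := Finset.centroid ℝ Finset.univ A

/-- `C` is a circumcenter of the simplex with vertices `A`:
it is equidistant from all the vertices. -/
def IsCircumcenter (A : Fin (d+1) → Pt d) (C : Pt d) : Prop :=
  ∃ r : ℝ, ∀ i, dist C (A i) = r

/-- The affine span (hyperplane) of the facet opposite to vertex `j`. -/
def facetSpan (A : Fin (d+1) → Pt d) (j : Fin (d+1)) : Set (Pt d) :=
  (affineSpan ℝ (A '' {i | i ≠ j}) : Set (Pt d))

/-- `I` is the incenter of the simplex with vertices `A`: an interior point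
equidistant from the affine hyperplanes spanned by the facets. -/
def IsIncenter (A : Fin (d+1) → Pt d) (I : Pt d) : Prop :=
  I ∈ interior (convexHull ℝ (Set.range A)) ∧
    ∃ r : ℝ, ∀ j, Metric.infDist I (facetSpan A j) = r

/-- `F` is a Fermat-Torricelli point of the simplex with vertices `A`:
it minimizes the sum of the distances to the vertices. -/
def IsFermatPoint (A : Fin (d+1) → Pt d) (F : Pt d) : Prop :=
  ∀ Q : Pt d, ∑ i, dist F (A i) ≤ ∑ i, dist Q (A i)

/-- The altitude of the simplex at vertex `j`: the distance from `A j` to the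
affine span of the opposite facet. -/
def altitude (A : Fin (d+1) → Pt d) (j : Fin (d+1)) : ℝ :=
  Metric.infDist (A j) (facetSpan A j)

/-- Equiareal: all facets have the same `(d-1)`-dimensional volume; equivalently
(since `d · vol S = facet volume · altitude`), all altitudes are equal. -/
def Equiareal (A : Fin (d+1) → Pt d) : Prop :=
  ∀ j k, altitude A j = altitude A k

/-- `r` is the circumradius of the facet opposite `j`: some point of the affine
span of the facet is at distance `r` from all its vertices. -/
def IsFacetCircumradius (A : Fin (d+1) → Pt d) (j : Fin (d+1)) (r : ℝ) : Prop :=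
  ∃ C ∈ affineSpan ℝ (A '' {i | i ≠ j}), ∀ i, i ≠ j → dist C (A i) = r

/-- Equiradial: all facets have the same circumradius. -/
def Equiradial (A : Fin (d+1) → Pt d) : Prop :=
  ∃ r : ℝ, ∀ j, IsFacetCircumradius A j r

/-- Equifacetal: any two facets are congruent, i.e. there is an isometry of the
ambient space carrying the vertex set of one facet onto that of the other. -/
def Equifacetal (A : Fin (d+1) → Pt d) : Prop :=
  ∀ j k, ∃ f : Pt d ≃ᵢ Pt d, f '' (A '' {i | i ≠ j}) = A '' {i | i ≠ k}

/-- Regular: all edges have equal length. -/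
def Regular (A : Fin (d+1) → Pt d) : Prop :=
  ∀ i j k l, i ≠ j → k ≠ l → dist (A i) (A j) = dist (A k) (A l)

section EHMAux

private lemma sum_if_one' {n : ℕ} (i : Fin n) (a c : ℝ) :
    ∑ k : Fin n, (if k = i then a else c) = a + ((n : ℝ) - 1) * c := by
  have h : ∀ k : Fin n, (if k = i then a else c) = (if k = i then a - c else 0) + c :=
    fun k => by split <;> ring
  rw [Finset.sum_congr rfl fun k _ => h k, Finset.sum_add_distrib,
    Finset.sum_ite_eq' Finset.univ i fun _ => a - c, Finset.sum_const]
  simp [Finset.card_univ]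
  ring

private lemma sum_if_two' {n : ℕ} (i j : Fin n) (hij : i ≠ j) (a b c : ℝ) :
    ∑ k : Fin n, (if k = i then a else if k = j then b else c)
      = a + b + ((n : ℝ) - 2) * c := by
  have h : ∀ k : Fin n, (if k = i then a else if k = j then b else c)
      = (if k = i then a - c else 0) + ((if k = j then b - c else 0) + c) := by
    intro k
    rcases eq_or_ne k i with rfl | h1
    · rw [if_pos rfl, if_pos rfl, if_neg hij]; ring
    · rcases eq_or_ne k j with rfl | h2
      · rw [if_neg h1, if_pos rfl, if_neg h1, if_pos rfl]; ring
      · rw [if_neg h1, if_neg h2, if_neg h1, if_neg h2]; ring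
  rw [Finset.sum_congr rfl fun k _ => h k, Finset.sum_add_distrib, Finset.sum_add_distrib,
    Finset.sum_ite_eq' Finset.univ i fun _ => a - c,
    Finset.sum_ite_eq' Finset.univ j fun _ => b - c, Finset.sum_const]
  simp [Finset.card_univ]
  ring

private lemma mem_span_of_eq_comb {d : ℕ} {S : Set (Pt d)} {x₀ : Pt d} (hx₀ : x₀ ∈ S)
    {n : ℕ} (p : Fin n → Pt d) (hp : ∀ i, p i ∈ S) (w : Fin n → ℝ) (C : Pt d)
    (hC : C = (∑ i, w i • (p i - x₀)) + x₀) :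
    C ∈ affineSpan ℝ S := by
  rw [hC]
  have hdir : (∑ i, w i • (p i - x₀)) ∈ (affineSpan ℝ S).direction := by
    rw [direction_affineSpan]
    refine Submodule.sum_mem _ fun i _ => Submodule.smul_mem _ _ ?_
    have := vsub_mem_vectorSpan ℝ (hp i) hx₀
    simpa [vsub_eq_sub] using this
  have := AffineSubspace.vadd_mem_of_mem_direction hdir (mem_affineSpan ℝ hx₀)
  simpa [vadd_eq_add] using this

private lemma inner_eq_of_mem_span {d : ℕ} {S : Set (Pt d)} {nv : Pt d} {c : ℝ}
    (hS : ∀ x ∈ S, (inner ℝ nv x : ℝ) = c) {x : Pt d} (hx : x ∈ affineSpan ℝ S) :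
    (inner ℝ nv x : ℝ) = c := by
  refine affineSpan_induction (p := fun y => (inner ℝ nv y : ℝ) = c) hx hS ?_
  intro t u v w hu hv hw
  simp only [vsub_eq_sub, vadd_eq_add, inner_add_right, inner_sub_right, inner_smul_right,
    hu, hv, hw]
  ring

private lemma dist_pt (d : ℕ) (x y : Pt d) : dist x y = Real.sqrt (∑ k, (x k - y k) ^ 2) := by
  rw [EuclideanSpace.dist_eq]
  exact congrArg _ (Finset.sum_congr rfl fun k _ => by rw [Real.dist_eq, sq_abs])

private lemma inner_pt (d : ℕ) (x y : Pt d) : (inner ℝ x y : ℝ) = ∑ k, x k * y k := by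
  simp [PiLp.inner_apply, RCLike.inner_apply, conj_trivial, mul_comm]

private lemma norm_pt (d : ℕ) (x : Pt d) : ‖x‖ = Real.sqrt (∑ k, x k ^ 2) := by
  rw [EuclideanSpace.norm_eq]
  exact congrArg _ (Finset.sum_congr rfl fun k _ => by rw [Real.norm_eq_abs, sq_abs])

end EHMAux

set_option maxHeartbeats 1000000 in
/-- Theorem 3.4. For every `d ≥ 4` there is a `d`-simplex
which is equiradial but not equiareal. -/
theorem statement10 (d : ℕ) (hd : 4 ≤ d) :
    ∃ A : Fin (d+1) → Pt d, AffineIndependent ℝ A ∧ Equiradial A ∧ ¬ Equiareal A := by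
  have hd4 : (4:ℝ) ≤ (d:ℝ) := by exact_mod_cast hd
  have hD0 : (0:ℝ) < (d:ℝ) := by linarith
  have hD2 : (0:ℝ) < (d:ℝ) - 2 := by linarith
  have hDne : (d:ℝ) ≠ 0 := ne_of_gt hD0
  have hD2ne : (d:ℝ) - 2 ≠ 0 := ne_of_gt hD2
  set e : ℝ := Real.sqrt ((d:ℝ) - 3) with hedef
  have he2 : e ^ 2 = (d:ℝ) - 3 := Real.sq_sqrt (by linarith)
  have he0' : 0 ≤ e := Real.sqrt_nonneg _
  have he1 : 1 ≤ e := by nlinarith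
  have he0 : 0 < e := by linarith
  set q : ℝ := (1 + e) / (d:ℝ) with hqdef
  have hDq : (d:ℝ) * q = 1 + e := by rw [hqdef]; field_simp
  have hq2 : (d:ℝ)^2 * q^2 - 2*((d:ℝ)*q) = (d:ℝ) - 4 := by nlinarith [hDq, he2]
  set r : ℝ := Real.sqrt (((d:ℝ) - 1)/(d:ℝ)) with hrdef
  set A : Fin (d+1) → Pt d :=
    fun i => WithLp.toLp 2 (fun k => if (i:ℕ) = d then q else if (k:ℕ) = (i:ℕ) then 1 else 0 : Fin d → ℝ)
    with hA
  have hAlast : ∀ k : Fin d, A (Fin.last d) k = q := by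
    intro k; simp [hA]
  have hAcs : ∀ i k : Fin d, A i.castSucc k = if k = i then 1 else 0 := by
    intro i k
    simp only [hA, Fin.coe_castSucc]
    rw [if_neg (Nat.ne_of_lt i.isLt)]
    simp [Fin.ext_iff]
  have hcs_ne_last : ∀ i : Fin d, i.castSucc ≠ Fin.last d :=
    fun i => (Fin.castSucc_lt_last i).ne
  set z : Fin d := ⟨0, by omega⟩ with hzdef
  have hz0 : z.castSucc = (0 : Fin (d+1)) := rfl
  have hsum_apply : ∀ {n : ℕ} (f : Fin n → Pt d) (m : Fin d),
      (∑ i, f i) m = ∑ i, f i m := fun f m => by simp [WithLp.ofLp_sum]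
  -- Affine independence
  have hAI : AffineIndependent ℝ A := by
    rw [affineIndependent_iff_of_fintype]
    intro w h0 hw
    rw [Finset.weightedVSub_eq_linear_combination _ h0] at hw
    have hcoord : ∀ k : Fin d, w k.castSucc = -(q * w (Fin.last d)) := by
      intro k
      have h : ∑ i : Fin (d+1), w i * A i k = 0 := by
        calc ∑ i : Fin (d+1), w i * A i k
            = (∑ i : Fin (d+1), w i • A i) k := (hsum_apply (fun i => w i • A i) k).symm
          _ = (0 : Pt d) k := by rw [hw]
          _ = 0 := rfl
      rw [Fin.sum_univ_castSucc] at h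
      have hs : ∀ i : Fin d, w i.castSucc * A i.castSucc k
          = if i = k then w i.castSucc else 0 := by
        intro i
        rw [hAcs]
        rcases eq_or_ne i k with rfl | hik
        · rw [if_pos rfl, if_pos rfl]; ring
        · rw [if_neg (Ne.symm hik), if_neg hik]; ring
      rw [Finset.sum_congr rfl fun i _ => hs i,
        Finset.sum_ite_eq' Finset.univ k fun i => w i.castSucc,
        if_pos (Finset.mem_univ k), hAlast] at h
      linear_combination h
    have hlast : w (Fin.last d) = 0 := by
      rw [Fin.sum_univ_castSucc, Finset.sum_congr rfl fun k _ => hcoord k,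
        Finset.sum_const] at h0
      simp only [Finset.card_univ, Fintype.card_fin, nsmul_eq_mul] at h0
      have hkey : (1 - (d:ℝ) * q) * w (Fin.last d) = 0 := by linear_combination h0
      rw [hDq] at hkey
      have h1 : (1 - (1+e)) ≠ 0 := by linarith
      exact (mul_eq_zero.mp hkey).resolve_left h1
    intro i
    rcases eq_or_ne i (Fin.last d) with rfl | hi
    · exact hlast
    · rw [← Fin.castSucc_castPred i hi, hcoord, hlast]; ring
  -- membership of the base-facet circumcenter
  have hcent_mem : (WithLp.toLp 2 (fun _ => 1/(d:ℝ) : Fin d → ℝ) : Pt d)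
      ∈ affineSpan ℝ (A '' {i | i ≠ Fin.last d}) := by
    refine mem_span_of_eq_comb (S := A '' {i | i ≠ Fin.last d}) (x₀ := A z.castSucc)
      ⟨z.castSucc, hcs_ne_last z, rfl⟩
      (fun i : Fin d => A i.castSucc)
      (fun i => ⟨i.castSucc, hcs_ne_last i, rfl⟩)
      (fun _ => 1/(d:ℝ)) _ ?_
    ext m
    rw [PiLp.add_apply, hsum_apply]
    simp only [PiLp.smul_apply, PiLp.sub_apply, smul_eq_mul]
    have hsummand : ∀ i : Fin d, (1/(d:ℝ)) * (A i.castSucc m - A z.castSucc m)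
        = if i = m then (1/(d:ℝ)) * (1 - A z.castSucc m)
          else (1/(d:ℝ)) * (0 - A z.castSucc m) := by
      intro i
      rw [hAcs i m]
      rcases eq_or_ne i m with rfl | him
      · rw [if_pos rfl, if_pos rfl]
      · rw [if_neg (Ne.symm him), if_neg him]
    rw [Finset.sum_congr rfl fun i _ => hsummand i, sum_if_one']
    show (1:ℝ)/(d:ℝ) = _
    field_simp
    ring
  -- Equiradial
  have hrad : ∀ j : Fin (d+1), IsFacetCircumradius A j r := by
    intro j
    rcases eq_or_ne j (Fin.last d) with rfl | hj
    · refine ⟨(WithLp.toLp 2 (fun _ => 1/(d:ℝ) : Fin d → ℝ) : Pt d), hcent_mem, ?_⟩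
      intro i hi
      rw [← Fin.castSucc_castPred i hi, dist_pt]
      have hsq : ∀ k : Fin d,
          ((WithLp.toLp 2 (fun _ => 1/(d:ℝ) : Fin d → ℝ) : Pt d) k - A (i.castPred hi).castSucc k)^2
          = if k = i.castPred hi then (1/(d:ℝ) - 1)^2 else (1/(d:ℝ) - 0)^2 := by
        intro k
        show ((1:ℝ)/(d:ℝ) - A (i.castPred hi).castSucc k)^2 = _
        rw [hAcs]
        rcases eq_or_ne k (i.castPred hi) with rfl | h
        · rw [if_pos rfl, if_pos rfl]
        · rw [if_neg h, if_neg h]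
      rw [Finset.sum_congr rfl fun k _ => hsq k, sum_if_one', hrdef]
      congr 1
      field_simp
      ring
    · have hjd : (j:ℕ) < d := Fin.val_lt_last hj
      set j' : Fin d := ⟨(j:ℕ), hjd⟩ with hj'def
      set C : Pt d :=
        WithLp.toLp 2 (fun k => if k = j' then -q/((d:ℝ)-2) else (1-q)/((d:ℝ)-2) : Fin d → ℝ) with hCdef
      have hCk : ∀ k, C k = if k = j' then -q/((d:ℝ)-2) else (1-q)/((d:ℝ)-2) := fun _ => rfl
      have hlastmem : A (Fin.last d) ∈ A '' {i | i ≠ j} := ⟨Fin.last d, Ne.symm hj, rfl⟩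
      refine ⟨C, ?_, ?_⟩
      · refine mem_span_of_eq_comb (S := A '' {i | i ≠ j}) hlastmem
          (fun i : Fin d => if i = j' then A (Fin.last d) else A i.castSucc) ?_
          (fun i => if i = j' then 0 else 1/((d:ℝ)-2)) C ?_
        · intro i
          show (if i = j' then A (Fin.last d) else A i.castSucc) ∈ A '' {i | i ≠ j}
          by_cases h : i = j'
          · rw [if_pos h]; exact hlastmem
          · rw [if_neg h]
            refine ⟨i.castSucc, fun hc => h ?_, rfl⟩
            apply Fin.ext
            have hv := congrArg Fin.val hc
            simp only [Fin.coe_castSucc] at hv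
            simp [hj'def, hv]
        · ext m
          rw [PiLp.add_apply, hsum_apply]
          simp only [PiLp.smul_apply, PiLp.sub_apply, smul_eq_mul]
          rw [hCk m, hAlast]
          have hsummand : ∀ i : Fin d,
              (if i = j' then (0:ℝ) else 1/((d:ℝ)-2))
                * ((if i = j' then A (Fin.last d) else A i.castSucc) m - q)
              = if i = j' then 0
                else if i = m then (1/((d:ℝ)-2)) * (1 - q) else (1/((d:ℝ)-2)) * (0 - q) := by
            intro i
            rcases eq_or_ne i j' with rfl | h1
            · rw [if_pos rfl, if_pos rfl, if_pos rfl]; ring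
            · rw [if_neg h1, if_neg h1, if_neg h1, hAcs]
              rcases eq_or_ne i m with rfl | h2
              · rw [if_pos rfl, if_pos rfl]
              · rw [if_neg (Ne.symm h2), if_neg h2]
          rw [Finset.sum_congr rfl fun i _ => hsummand i]
          by_cases hm : m = j'
          · have hconv : ∀ i : Fin d,
                (if i = j' then (0:ℝ)
                  else if i = m then (1/((d:ℝ)-2)) * (1 - q) else (1/((d:ℝ)-2)) * (0 - q))
                = if i = j' then 0 else (1/((d:ℝ)-2)) * (0 - q) := by
              intro i
              rcases eq_or_ne i j' with rfl | h1
              · rw [if_pos rfl, if_pos rfl]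
              · rw [if_neg h1, if_neg h1, if_neg (fun hc => h1 (hc.trans hm))]
            rw [Finset.sum_congr rfl fun i _ => hconv i, sum_if_one', if_pos hm]
            field_simp
            ring
          · rw [sum_if_two' j' m (fun h => hm h.symm), if_neg hm]
            field_simp
            ring
      · intro i hi
        rcases eq_or_ne i (Fin.last d) with rfl | hil
        · rw [dist_pt]
          have hsq : ∀ k : Fin d, (C k - A (Fin.last d) k)^2
              = if k = j' then (-q/((d:ℝ)-2) - q)^2 else ((1-q)/((d:ℝ)-2) - q)^2 := by
            intro k
            rw [hCk k, hAlast]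
            rcases eq_or_ne k j' with rfl | h
            · rw [if_pos rfl, if_pos rfl]
            · rw [if_neg h, if_neg h]
          rw [Finset.sum_congr rfl fun k _ => hsq k, sum_if_one', hrdef]
          congr 1
          field_simp
          linear_combination ((d:ℝ)-1)^2*((d:ℝ)*q-1+e) * hDq + ((d:ℝ)-1)^2 * he2
        · have hi0 : (i.castPred hil) ≠ j' := by
            intro h
            apply hi
            apply Fin.ext
            have hv := congrArg Fin.val h
            simpa [hj'def] using hv
          rw [← Fin.castSucc_castPred i hil, dist_pt]
          have hsq : ∀ k : Fin d, (C k - A (i.castPred hil).castSucc k)^2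
              = if k = j' then (-q/((d:ℝ)-2) - 0)^2
                else if k = i.castPred hil then ((1-q)/((d:ℝ)-2) - 1)^2
                else ((1-q)/((d:ℝ)-2) - 0)^2 := by
            intro k
            rw [hCk k, hAcs]
            rcases eq_or_ne k j' with rfl | h1
            · rw [if_pos rfl, if_neg (Ne.symm hi0), if_pos rfl]
            · rcases eq_or_ne k (i.castPred hil) with rfl | h2
              · rw [if_neg h1, if_pos rfl, if_neg h1, if_pos rfl]
              · rw [if_neg h1, if_neg h2, if_neg h1, if_neg h2]
          rw [Finset.sum_congr rfl fun k _ => hsq k,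
            sum_if_two' j' (i.castPred hil) (Ne.symm hi0), hrdef]
          congr 1
          field_simp
          linear_combination ((d:ℝ)*q-1+e) * hDq + he2
  -- upper bound for the altitude at the apex
  have hupper : altitude A (Fin.last d) ≤ e / Real.sqrt (d:ℝ) := by
    have hmem : (WithLp.toLp 2 (fun _ => 1/(d:ℝ) : Fin d → ℝ) : Pt d) ∈ facetSpan A (Fin.last d) := hcent_mem
    refine le_trans (Metric.infDist_le_dist_of_mem hmem) ?_
    rw [dist_pt]
    have hsq : ∀ k : Fin d,
        (A (Fin.last d) k - (WithLp.toLp 2 (fun _ => 1/(d:ℝ) : Fin d → ℝ) : Pt d) k)^2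
        = (q - 1/(d:ℝ))^2 := by
      intro k; rw [hAlast]
    rw [Finset.sum_congr rfl fun k _ => hsq k, Finset.sum_const]
    simp only [Finset.card_univ, Fintype.card_fin, nsmul_eq_mul]
    have h1 : (d:ℝ) * (q - 1/(d:ℝ))^2 = e^2/(d:ℝ) := by
      rw [hqdef]
      field_simp
      ring
    rw [h1, Real.sqrt_div (sq_nonneg e), Real.sqrt_sq he0']
  -- lower bound for the altitude at vertex 0
  have hlower : e * Real.sqrt (d:ℝ) / ((d:ℝ)-2) ≤ altitude A (0 : Fin (d+1)) := by
    set nv : Pt d := WithLp.toLp 2 (fun k => if k = z then q - e else q : Fin d → ℝ) with hnvdef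
    have hnvk : ∀ k, nv k = if k = z then q - e else q := fun _ => rfl
    have hinnerA : ∀ i : Fin d, (inner ℝ nv (A i.castSucc) : ℝ) = if i = z then q - e else q := by
      intro i
      rw [inner_pt]
      have hsummand : ∀ k : Fin d, nv k * A i.castSucc k
          = if k = i then (if i = z then q - e else q) else 0 := by
        intro k
        rw [hnvk, hAcs]
        rcases eq_or_ne k i with rfl | h
        · rw [if_pos rfl, if_pos rfl]; ring
        · rw [if_neg h, if_neg h]; ring
      rw [Finset.sum_congr rfl fun k _ => hsummand k,
        Finset.sum_ite_eq' Finset.univ i _, if_pos (Finset.mem_univ i)]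
    have hS : ∀ x ∈ A '' {i | i ≠ (0 : Fin (d+1))}, (inner ℝ nv x : ℝ) = q := by
      rintro x ⟨i, hi, rfl⟩
      rcases eq_or_ne i (Fin.last d) with rfl | hil
      · rw [inner_pt]
        have hsummand : ∀ k : Fin d, nv k * A (Fin.last d) k
            = if k = z then (q-e)*q else q*q := by
          intro k
          rw [hnvk, hAlast]
          rcases eq_or_ne k z with rfl | h
          · rw [if_pos rfl, if_pos rfl]
          · rw [if_neg h, if_neg h]
        rw [Finset.sum_congr rfl fun k _ => hsummand k, sum_if_one']
        linear_combination q * hDq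
      · have hiz : i.castPred hil ≠ z := by
          intro h
          apply hi
          apply Fin.ext
          have hv := congrArg Fin.val h
          simpa [hzdef] using hv
        rw [← Fin.castSucc_castPred i hil, hinnerA, if_neg hiz]
    have hnormnv : ‖nv‖ = ((d:ℝ)-2)/Real.sqrt (d:ℝ) := by
      rw [norm_pt]
      have hsq : ∀ k : Fin d, nv k ^2 = if k = z then (q-e)^2 else q^2 := by
        intro k
        rw [hnvk]
        rcases eq_or_ne k z with rfl | h
        · rw [if_pos rfl, if_pos rfl]
        · rw [if_neg h, if_neg h]
      rw [Finset.sum_congr rfl fun k _ => hsq k, sum_if_one']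
      have hX : (q-e)^2 + ((d:ℝ)-1)*q^2 = ((d:ℝ)-2)^2/(d:ℝ) := by
        field_simp
        linear_combination ((d:ℝ)*q+1-e) * hDq + ((d:ℝ)-1) * he2
      rw [hX, Real.sqrt_div (sq_nonneg _), Real.sqrt_sq hD2.le]
    have hnvpos : 0 < ‖nv‖ := by
      rw [hnormnv]
      positivity
    have hbound : ∀ y ∈ facetSpan A (0 : Fin (d+1)),
        e * Real.sqrt (d:ℝ) / ((d:ℝ)-2) ≤ dist (A (0 : Fin (d+1))) y := by
      intro y hy
      have hy' : (inner ℝ nv y : ℝ) = q := inner_eq_of_mem_span hS hy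
      have hA0 : (inner ℝ nv (A (0 : Fin (d+1))) : ℝ) = q - e := by
        rw [← hz0, hinnerA, if_pos rfl]
      have hcs : |(inner ℝ nv (A (0 : Fin (d+1)) - y) : ℝ)| ≤ ‖nv‖ * ‖A (0 : Fin (d+1)) - y‖ :=
        abs_real_inner_le_norm _ _
      rw [inner_sub_right, hy', hA0] at hcs
      have habs : |q - e - q| = e := by
        rw [abs_of_nonpos (by linarith)]; ring
      rw [habs] at hcs
      have hkey : ‖nv‖ * (e * Real.sqrt (d:ℝ) / ((d:ℝ)-2)) = e := by
        rw [hnormnv]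
        have hs : Real.sqrt (d:ℝ) ≠ 0 := ne_of_gt (Real.sqrt_pos.2 hD0)
        field_simp
      rw [dist_eq_norm]
      refine (mul_le_mul_iff_of_pos_left hnvpos).mp ?_
      rw [hkey]
      exact hcs
    have hlast_ne_zero : Fin.last d ≠ (0 : Fin (d+1)) := by
      intro hh
      have := congrArg Fin.val hh
      simp [Fin.val_last] at this
      omega
    have hne : Nonempty ↥(facetSpan A (0 : Fin (d+1))) :=
      ⟨⟨A (Fin.last d), subset_affineSpan ℝ _ ⟨Fin.last d, hlast_ne_zero, rfl⟩⟩⟩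
    show e * Real.sqrt (d:ℝ) / ((d:ℝ)-2) ≤ Metric.infDist (A (0 : Fin (d+1))) (facetSpan A (0 : Fin (d+1)))
    rw [Metric.infDist_eq_iInf]
    exact le_ciInf fun y => hbound y y.2
  -- conclusion
  refine ⟨A, hAI, ⟨r, hrad⟩, ?_⟩
  intro hEq
  have h := hEq (0 : Fin (d+1)) (Fin.last d)
  have hle : e * Real.sqrt (d:ℝ) / ((d:ℝ)-2) ≤ e / Real.sqrt (d:ℝ) := by
    calc e * Real.sqrt (d:ℝ) / ((d:ℝ)-2) ≤ altitude A (0 : Fin (d+1)) := hlower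
    _ = altitude A (Fin.last d) := h
    _ ≤ e / Real.sqrt (d:ℝ) := hupper
  have hs : 0 < Real.sqrt (d:ℝ) := Real.sqrt_pos.2 hD0
  have hss : Real.sqrt (d:ℝ) * Real.sqrt (d:ℝ) = (d:ℝ) := Real.mul_self_sqrt hD0.le
  rw [div_le_div_iff₀ hD2 hs] at hle
  have h2 : e * Real.sqrt (d:ℝ) * Real.sqrt (d:ℝ) = e * (d:ℝ) := by
    rw [mul_assoc, hss]
  rw [h2] at hle
  nlinarith [hle, he0, hd4]
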